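/- Let A ∈ ℂ^{n×n} be of the form A = Q diag(J_1,…,J_p) Q^{-1} where each J_i is an m_i × m_i Jordan block (∑ m_i = n), and let Ã = A + E. Let Λ = diag(λ_1 I_{m_1}, …, λ_p I_{m_p}) be the diagonal of eigenvalues, and T = diag(T_1,…,T_p) with T_i = diag(1, ε, …, ε^{m_i−1}) for some 0 < ε ≤ 1. Then ‖T^{-1}Q^{-1}ÃQT − Λ‖_F² ≤ ε^{2(1−m)}δ(E_Q)² + 2ε²√(n−p)·δ(E_Q) + (n−p)ε² + (1/n)|tr(E)|², where m = max_i m_i, E_Q = Q^{-1}EQ, and δ(M) := (‖M‖_F² − (1/n)|tr(M)|²)^{1/2}. -/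

import Mathlib

open Matrix BigOperators Polynomial

/-- Squared Frobenius norm over an arbitrary finite index type. -/
noncomputable def frobSq {ι : Type*} [Fintype ι] (M : Matrix ι ι ℂ) : ℝ :=
  ∑ i, ∑ j, ‖M i j‖ ^ 2

/-- δ(M)² = ‖M‖_F² − (1/n)|tr M|². -/
noncomputable def deltaSq {ι : Type*} [Fintype ι] (M : Matrix ι ι ℂ) : ℝ :=
  frobSq M - (1 / (Fintype.card ι : ℝ)) * ‖M.trace‖ ^ 2

noncomputable def delta {ι : Type*} [Fintype ι] (M : Matrix ι ι ℂ) : ℝ :=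
  Real.sqrt (deltaSq M)

/-- The m×m Jordan block with eigenvalue lam. -/
def jordanBlock (m : ℕ) (lam : ℂ) : Matrix (Fin m) (Fin m) ℂ :=
  Matrix.of fun j k => if j = k then lam else if (j : ℕ) + 1 = (k : ℕ) then 1 else 0

set_option maxHeartbeats 1000000 in
theorem stmt8 {p : ℕ} (hp : 1 ≤ p) (m : Fin p → ℕ) (hm : ∀ i, 1 ≤ m i)
    (lam : Fin p → ℂ)
    (Q : Matrix ((i : Fin p) × Fin (m i)) ((i : Fin p) × Fin (m i)) ℂ)
    (hQ : IsUnit Q.det)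
    (E : Matrix ((i : Fin p) × Fin (m i)) ((i : Fin p) × Fin (m i)) ℂ)
    (ε : ℝ) (hε0 : 0 < ε) (hε1 : ε ≤ 1)
    (n : ℕ) (hn : n = ∑ i, m i)
    (mmax : ℕ) (hmmax : mmax = Finset.univ.sup m)
    (A : Matrix ((i : Fin p) × Fin (m i)) ((i : Fin p) × Fin (m i)) ℂ)
    (hA : A = Q * Matrix.blockDiagonal' (fun i => jordanBlock (m i) (lam i)) * Q⁻¹)
    (Λ : Matrix ((i : Fin p) × Fin (m i)) ((i : Fin p) × Fin (m i)) ℂ)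
    (hΛ : Λ = Matrix.blockDiagonal' fun i =>
      (lam i) • (1 : Matrix (Fin (m i)) (Fin (m i)) ℂ))
    (T : Matrix ((i : Fin p) × Fin (m i)) ((i : Fin p) × Fin (m i)) ℂ)
    (hT : T = Matrix.blockDiagonal' fun i =>
      Matrix.diagonal fun j : Fin (m i) => (ε : ℂ) ^ (j : ℕ)) :
    frobSq (T⁻¹ * Q⁻¹ * (A + E) * Q * T - Λ) ≤
      ((ε ^ (mmax - 1))⁻¹) ^ 2 * deltaSq (Q⁻¹ * E * Q) +
        2 * ε ^ 2 * Real.sqrt ((n : ℝ) - p) * delta (Q⁻¹ * E * Q) +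
        ((n : ℝ) - p) * ε ^ 2 +
        (1 / (n : ℝ)) * ‖E.trace‖ ^ 2 := by
  classical
  have hQl := Matrix.nonsing_inv_mul Q hQ
  have hQr := Matrix.mul_nonsing_inv Q hQ
  set EQ := Q⁻¹ * E * Q with hEQdef
  set Jb := Matrix.blockDiagonal' (fun i => jordanBlock (m i) (lam i)) with hJbdef
  set d : ((i : Fin p) × Fin (m i)) → ℂ := fun x => (ε : ℂ) ^ (x.2 : ℕ) with hd
  have hεC : (ε : ℂ) ≠ 0 := by exact_mod_cast hε0.ne'
  have hdne : ∀ x, d x ≠ 0 := fun x => pow_ne_zero _ hεC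
  -- T is a diagonal matrix
  have hTd : T = Matrix.diagonal d := by
    rw [hT]
    ext ⟨i, j⟩ ⟨i', k⟩
    rcases eq_or_ne i i' with rfl | h
    · rw [Matrix.blockDiagonal'_apply_eq]
      rcases eq_or_ne j k with rfl | hjk
      · simp [hd]
      · rw [Matrix.diagonal_apply_ne _ hjk, Matrix.diagonal_apply_ne]
        exact fun hc => hjk (by
          have := (Sigma.mk.inj_iff.mp hc).2
          exact eq_of_heq this)
    · rw [Matrix.blockDiagonal'_apply_ne _ _ _ h, Matrix.diagonal_apply_ne]
      exact fun hc => h (congrArg Sigma.fst hc)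
  have hTinv : T⁻¹ = Matrix.diagonal (fun x => (d x)⁻¹) := by
    rw [hTd]
    refine Matrix.inv_eq_left_inv ?_
    rw [Matrix.diagonal_mul_diagonal,
      show (fun x => (d x)⁻¹ * d x) = fun _ => (1 : ℂ) from
        funext fun x => inv_mul_cancel₀ (hdne x), Matrix.diagonal_one]
  -- conjugation
  have hconj : Q⁻¹ * (A + E) * Q = Jb + EQ := by
    rw [hA, Matrix.mul_add, Matrix.add_mul]
    congr 1
    have h1 : Q⁻¹ * (Q * Jb * Q⁻¹) * Q = Q⁻¹ * Q * (Jb * (Q⁻¹ * Q)) := by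
      simp only [Matrix.mul_assoc]
    rw [h1, hQl, Matrix.one_mul, Matrix.mul_one]
  set N := T⁻¹ * Q⁻¹ * (A + E) * Q * T - Λ with hNdef
  have hNentry : ∀ x y, N x y = (d x)⁻¹ * (Jb x y + EQ x y) * d y - Λ x y := by
    intro x y
    have h1 : T⁻¹ * Q⁻¹ * (A + E) * Q * T
        = Matrix.diagonal (fun x => (d x)⁻¹) * (Jb + EQ) * Matrix.diagonal d := by
      rw [← hTinv, ← hTd, ← hconj]
      simp only [Matrix.mul_assoc]
    rw [hNdef, Matrix.sub_apply, h1, Matrix.mul_diagonal, Matrix.diagonal_mul,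
      Matrix.add_apply]
  -- entry values of Jb and Λ
  have hΛd : ∀ x, Λ x x = lam x.1 := by
    rintro ⟨i, j⟩
    rw [hΛ, Matrix.blockDiagonal'_apply_eq]
    simp
  have hΛo : ∀ x y, x ≠ y → Λ x y = 0 := by
    rintro ⟨i, j⟩ ⟨i', k⟩ hne
    rcases eq_or_ne i i' with rfl | h
    · have hjk : j ≠ k := fun hc => hne (by rw [hc])
      rw [hΛ, Matrix.blockDiagonal'_apply_eq]
      simp [Matrix.one_apply_ne hjk]
    · rw [hΛ, Matrix.blockDiagonal'_apply_ne _ _ _ h]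
  have hJd : ∀ x, Jb x x = lam x.1 := by
    rintro ⟨i, j⟩
    rw [hJbdef, Matrix.blockDiagonal'_apply_eq]
    simp [jordanBlock]
  have hJs : ∀ (i : Fin p) (j k : Fin (m i)), (j : ℕ) + 1 = (k : ℕ) →
      Jb ⟨i, j⟩ ⟨i, k⟩ = 1 := by
    intro i j k hjk
    have hne : j ≠ k := by intro hc; subst hc; omega
    rw [hJbdef, Matrix.blockDiagonal'_apply_eq]
    simp only [jordanBlock, Matrix.of_apply]
    rw [if_neg hne, if_pos hjk]
  have hJo : ∀ x y, x ≠ y → ¬(x.1 = y.1 ∧ (x.2 : ℕ) + 1 = (y.2 : ℕ)) → Jb x y = 0 := by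
    rintro ⟨i, j⟩ ⟨i', k⟩ hne hns
    rcases eq_or_ne i i' with rfl | h
    · have hjk : j ≠ k := fun hc => hne (by rw [hc])
      have hs : ¬((j : ℕ) + 1 = (k : ℕ)) := fun hc => hns ⟨rfl, hc⟩
      rw [hJbdef, Matrix.blockDiagonal'_apply_eq]
      simp only [jordanBlock, Matrix.of_apply]
      rw [if_neg hjk, if_neg hs]
    · rw [hJbdef, Matrix.blockDiagonal'_apply_ne _ _ _ h]
  -- scalar quantities
  set c1 : ℝ := ((ε ^ (mmax - 1))⁻¹) ^ 2 with hc1def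
  set a : ((i : Fin p) × Fin (m i)) → ((i : Fin p) × Fin (m i)) → ℝ :=
    fun x y => ‖EQ x y‖ ^ 2 with ha
  set ind : ((i : Fin p) × Fin (m i)) → ((i : Fin p) × Fin (m i)) → ℝ :=
    fun x y => if x.1 = y.1 ∧ (x.2 : ℕ) + 1 = (y.2 : ℕ) then (1 : ℝ) else 0 with hind
  have hεm : 0 < ε ^ (mmax - 1) := pow_pos hε0 _
  have hεm1 : ε ^ (mmax - 1) ≤ 1 := pow_le_one₀ hε0.le hε1
  have hc1_1 : 1 ≤ c1 := by
    rw [hc1def]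
    nlinarith [(one_le_inv₀ hεm).mpr hεm1]
  have hjle : ∀ x : (i : Fin p) × Fin (m i), (x.2 : ℕ) ≤ mmax - 1 := by
    intro x
    have h1 : m x.1 ≤ mmax := hmmax ▸ Finset.le_sup (Finset.mem_univ x.1)
    have h2 : (x.2 : ℕ) < m x.1 := x.2.2
    omega
  have hscale : ∀ x y : (i : Fin p) × Fin (m i),
      ‖(d x)⁻¹ * d y‖ ≤ (ε ^ (mmax - 1))⁻¹ := by
    intro x y
    have h1 : ‖(d x)⁻¹ * d y‖ = (ε ^ (x.2 : ℕ))⁻¹ * ε ^ (y.2 : ℕ) := by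
      simp [hd, norm_mul, norm_inv, norm_pow, Complex.norm_real, Real.norm_eq_abs, abs_of_pos hε0]
    rw [h1]
    have h2 : (ε ^ (x.2 : ℕ))⁻¹ ≤ (ε ^ (mmax - 1))⁻¹ := by
      apply inv_anti₀ hεm
      exact pow_le_pow_of_le_one hε0.le hε1 (hjle x)
    have h3 : ε ^ (y.2 : ℕ) ≤ 1 := pow_le_one₀ hε0.le hε1
    calc (ε ^ (x.2 : ℕ))⁻¹ * ε ^ (y.2 : ℕ) ≤ (ε ^ (mmax - 1))⁻¹ * 1 :=
          mul_le_mul h2 h3 (pow_pos hε0 _).le (inv_nonneg.mpr hεm.le)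
      _ = (ε ^ (mmax - 1))⁻¹ := mul_one _
  -- the pointwise bound
  have hbound : ∀ x y, ‖N x y‖ ^ 2 ≤
      c1 * a x y + (if x = y then (1 - c1) * a x y else 0) +
        ind x y * ((ε ^ 2 - c1) * a x y + 2 * ε ^ 2 * ‖EQ x y‖ + ε ^ 2) := by
    intro x y
    rcases eq_or_ne x y with rfl | hne
    · have hix : ind x x = 0 := by simp [hind]
      have hNxx : N x x = EQ x x := by
        rw [hNentry, hJd, hΛd]
        have h1 : (d x)⁻¹ * (lam x.1 + EQ x x) * d x
            = (lam x.1 + EQ x x) * ((d x)⁻¹ * d x) := by ring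
        rw [h1, inv_mul_cancel₀ (hdne x), mul_one, add_sub_cancel_left]
      rw [hNxx, hix, if_pos rfl, ha]
      ring_nf
      exact le_refl _
    · by_cases hs : x.1 = y.1 ∧ (x.2 : ℕ) + 1 = (y.2 : ℕ)
      · obtain ⟨i, j⟩ := x
        obtain ⟨i', k⟩ := y
        obtain ⟨h1, h2⟩ := hs
        dsimp only at h1 h2
        cases h1
        have hJ1 : Jb ⟨i, j⟩ ⟨i, k⟩ = 1 := hJs i j k h2
        have hΛ0 : Λ ⟨i, j⟩ ⟨i, k⟩ = 0 := hΛo _ _ hne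
        have hNv : N ⟨i, j⟩ ⟨i, k⟩ = (ε : ℂ) * (1 + EQ ⟨i, j⟩ ⟨i, k⟩) := by
          rw [hNentry, hJ1, hΛ0, sub_zero]
          have hdy : d ⟨i, k⟩ = (ε : ℂ) * d ⟨i, j⟩ := by
            simp only [hd]
            rw [← h2, pow_succ]
            ring
          rw [hdy]
          have h1 : (d ⟨i, j⟩)⁻¹ * (1 + EQ ⟨i, j⟩ ⟨i, k⟩) * ((ε : ℂ) * d ⟨i, j⟩)
              = (ε : ℂ) * (1 + EQ ⟨i, j⟩ ⟨i, k⟩) * ((d ⟨i, j⟩)⁻¹ * d ⟨i, j⟩) := by ring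
          rw [h1, inv_mul_cancel₀ (hdne ⟨i, j⟩), mul_one]
        set r := ‖EQ ⟨i, j⟩ ⟨i, k⟩‖ with hr
        have hr0 : 0 ≤ r := norm_nonneg _
        have habs : ‖N ⟨i, j⟩ ⟨i, k⟩‖ ≤ ε * (1 + r) := by
          rw [hNv, norm_mul, Complex.norm_real, Real.norm_eq_abs, abs_of_pos hε0]
          have h3 := norm_add_le 1 (EQ ⟨i, j⟩ ⟨i, k⟩)
          simp only [norm_one] at h3
          exact mul_le_mul_of_nonneg_left h3 hε0.le
        have hi1 : ind ⟨i, j⟩ ⟨i, k⟩ = 1 := by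
          simp [hind, h2]
        rw [hi1, if_neg hne, ha]
        calc ‖N ⟨i, j⟩ ⟨i, k⟩‖ ^ 2 ≤ (ε * (1 + r)) ^ 2 :=
              pow_le_pow_left₀ (norm_nonneg _) habs 2
          _ = c1 * r ^ 2 + 0 + 1 * ((ε ^ 2 - c1) * r ^ 2 + 2 * ε ^ 2 * r + ε ^ 2) := by ring
      · have hJ0 : Jb x y = 0 := hJo x y hne hs
        have hΛ0 := hΛo x y hne
        have hNv : N x y = (d x)⁻¹ * d y * EQ x y := by
          rw [hNentry, hJ0, hΛ0, zero_add, sub_zero]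
          ring
        have hi0 : ind x y = 0 := by
          simp only [hind]
          exact if_neg hs
        rw [hNv, hi0, if_neg hne, ha, norm_mul]
        have h4 := hscale x y
        have h5 : ‖(d x)⁻¹ * d y‖ ^ 2 ≤ c1 := by
          rw [hc1def]
          exact pow_le_pow_left₀ (norm_nonneg _) h4 2
        nlinarith [norm_nonneg (EQ x y), norm_nonneg ((d x)⁻¹ * d y),
          sq_nonneg (‖EQ x y‖)]
  -- aggregate quantities over the product type
  set t : ℝ := 1 / (n : ℝ) * ‖E.trace‖ ^ 2 with htdef
  set F : ℝ := ∑ z : ((i : Fin p) × Fin (m i)) × ((i : Fin p) × Fin (m i)), a z.1 z.2 with hFdef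
  set Dg : ℝ := ∑ x, a x x with hDgdef
  set Sup : ℝ := ∑ z : ((i : Fin p) × Fin (m i)) × ((i : Fin p) × Fin (m i)),
    ind z.1 z.2 * a z.1 z.2 with hSupdef
  set SupAbs : ℝ := ∑ z : ((i : Fin p) × Fin (m i)) × ((i : Fin p) × Fin (m i)),
    ind z.1 z.2 * ‖EQ z.1 z.2‖ with hSupAbsdef
  set cnt : ℝ := ∑ z : ((i : Fin p) × Fin (m i)) × ((i : Fin p) × Fin (m i)),
    ind z.1 z.2 with hcntdef
  have hind01 : ∀ x y, ind x y = 0 ∨ ind x y = 1 := by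
    intro x y
    rw [hind]
    dsimp only
    split <;> simp
  have ha0 : ∀ x y, 0 ≤ a x y := fun x y => by rw [ha]; positivity
  have hindd : ∀ x, ind x x = 0 := by
    intro x
    rw [hind]
    simp
  -- main sum bound
  have hmain : frobSq N ≤ c1 * F + (1 - c1) * Dg +
      ((ε ^ 2 - c1) * Sup + 2 * ε ^ 2 * SupAbs + ε ^ 2 * cnt) := by
    have h1 : frobSq N = ∑ z : ((i : Fin p) × Fin (m i)) × ((i : Fin p) × Fin (m i)),
        ‖N z.1 z.2‖ ^ 2 := by
      simp only [frobSq]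
      exact (Fintype.sum_prod_type
        (fun z : ((i : Fin p) × Fin (m i)) × ((i : Fin p) × Fin (m i)) =>
          ‖N z.1 z.2‖ ^ 2)).symm
    rw [h1]
    have h2 : ∀ z : ((i : Fin p) × Fin (m i)) × ((i : Fin p) × Fin (m i)),
        ‖N z.1 z.2‖ ^ 2 ≤
          c1 * a z.1 z.2 + (if z.1 = z.2 then (1 - c1) * a z.1 z.2 else 0) +
            ind z.1 z.2 * ((ε ^ 2 - c1) * a z.1 z.2 +
              2 * ε ^ 2 * ‖EQ z.1 z.2‖ + ε ^ 2) :=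
      fun z => hbound z.1 z.2
    calc ∑ z : ((i : Fin p) × Fin (m i)) × ((i : Fin p) × Fin (m i)),
          ‖N z.1 z.2‖ ^ 2
        ≤ ∑ z : ((i : Fin p) × Fin (m i)) × ((i : Fin p) × Fin (m i)),
            (c1 * a z.1 z.2 + (if z.1 = z.2 then (1 - c1) * a z.1 z.2 else 0) +
              ind z.1 z.2 * ((ε ^ 2 - c1) * a z.1 z.2 +
                2 * ε ^ 2 * ‖EQ z.1 z.2‖ + ε ^ 2)) :=
          Finset.sum_le_sum fun z _ => h2 z
      _ = c1 * F + (1 - c1) * Dg +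
            ((ε ^ 2 - c1) * Sup + 2 * ε ^ 2 * SupAbs + ε ^ 2 * cnt) := by
          rw [Finset.sum_add_distrib, Finset.sum_add_distrib]
          congr 1
          congr 1
          · rw [hFdef, Finset.mul_sum]
          · calc ∑ z : ((i : Fin p) × Fin (m i)) × ((i : Fin p) × Fin (m i)),
                  (if z.1 = z.2 then (1 - c1) * a z.1 z.2 else 0)
                = ∑ x, ∑ y, (if x = y then (1 - c1) * a x y else 0) :=
                  Fintype.sum_prod_type _
              _ = ∑ x, (1 - c1) * a x x := Finset.sum_congr rfl fun x _ => by
                  rw [Finset.sum_ite_eq]; simp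
              _ = (1 - c1) * Dg := by rw [hDgdef, Finset.mul_sum]
          · have : ∀ z : ((i : Fin p) × Fin (m i)) × ((i : Fin p) × Fin (m i)),
                ind z.1 z.2 * ((ε ^ 2 - c1) * a z.1 z.2 +
                    2 * ε ^ 2 * ‖EQ z.1 z.2‖ + ε ^ 2) =
                  (ε ^ 2 - c1) * (ind z.1 z.2 * a z.1 z.2) +
                    2 * ε ^ 2 * (ind z.1 z.2 * ‖EQ z.1 z.2‖) +
                      ε ^ 2 * ind z.1 z.2 := fun z => by ring
            rw [Finset.sum_congr rfl fun z _ => this z, Finset.sum_add_distrib,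
              Finset.sum_add_distrib, hSupdef, hSupAbsdef, hcntdef,
              Finset.mul_sum, Finset.mul_sum, Finset.mul_sum]
  -- trace and cardinality facts
  have htr : EQ.trace = E.trace := by
    rw [hEQdef, Matrix.trace_mul_cycle, hQr, Matrix.one_mul]
  have hcard : (Fintype.card ((i : Fin p) × Fin (m i))) = n := by
    rw [Fintype.card_sigma]
    simp [hn]
  have hpn : p ≤ n := by
    rw [hn]
    calc p = ∑ _i : Fin p, 1 := by simp
      _ ≤ ∑ i, m i := Finset.sum_le_sum fun i _ => hm i
  have hnpos : (0 : ℝ) < n := by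
    have : 1 ≤ n := le_trans hp hpn
    exact_mod_cast Nat.lt_of_lt_of_le Nat.zero_lt_one this
  have hFeq : deltaSq EQ = F - t := by
    rw [deltaSq, htdef, htr, hcard]
    congr 1
    rw [hFdef]
    simp only [frobSq, ha]
    exact (Fintype.sum_prod_type
      (fun z : ((i : Fin p) × Fin (m i)) × ((i : Fin p) × Fin (m i)) =>
        ‖EQ z.1 z.2‖ ^ 2)).symm
  have hDg_singlesum : Dg = ∑ x, ‖EQ x x‖ ^ 2 := by
    rw [hDgdef, ha]
  have ht_le_Dg : t ≤ Dg := by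
    have h0 : ‖EQ.trace‖ ≤ ∑ x, ‖EQ x x‖ := by
      rw [Matrix.trace]
      exact norm_sum_le _ _
    have h1 : (∑ x, ‖EQ x x‖) ^ 2 ≤
        (Fintype.card ((i : Fin p) × Fin (m i)) : ℝ) * ∑ x, ‖EQ x x‖ ^ 2 := by
      have := sq_sum_le_card_mul_sum_sq
        (s := (Finset.univ : Finset ((i : Fin p) × Fin (m i))))
        (f := fun x => ‖EQ x x‖)
      simpa [Finset.card_univ] using this
    have h2 : ‖E.trace‖ ^ 2 ≤ (n : ℝ) * Dg := by
      rw [← htr, hDg_singlesum]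
      calc ‖EQ.trace‖ ^ 2 ≤ (∑ x, ‖EQ x x‖) ^ 2 :=
            pow_le_pow_left₀ (norm_nonneg _) h0 2
        _ ≤ (Fintype.card ((i : Fin p) × Fin (m i)) : ℝ) * ∑ x, ‖EQ x x‖ ^ 2 := h1
        _ = (n : ℝ) * ∑ x, ‖EQ x x‖ ^ 2 := by rw [hcard]
    rw [htdef]
    rw [div_mul_eq_mul_div, one_mul, div_le_iff₀ hnpos]
    linarith [h2]
  -- diagonal vs total
  have hDg_prod : Dg = ∑ z : ((i : Fin p) × Fin (m i)) × ((i : Fin p) × Fin (m i)),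
      (if z.1 = z.2 then a z.1 z.2 else 0) := by
    symm
    calc ∑ z : ((i : Fin p) × Fin (m i)) × ((i : Fin p) × Fin (m i)),
          (if z.1 = z.2 then a z.1 z.2 else 0)
        = ∑ x, ∑ y, (if x = y then a x y else 0) := Fintype.sum_prod_type _
      _ = ∑ x, a x x := Finset.sum_congr rfl fun x _ => by
          rw [Finset.sum_ite_eq]; simp
      _ = Dg := hDgdef.symm
  have hSupDg_le_F : Sup + Dg ≤ F := by
    rw [hSupdef, hDg_prod, hFdef, ← Finset.sum_add_distrib]
    apply Finset.sum_le_sum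
    intro z _
    by_cases hzz : z.1 = z.2
    · have : ind z.1 z.2 = 0 := hzz ▸ hindd z.1
      rw [this, if_pos hzz, zero_mul, zero_add]
    · rw [if_neg hzz, add_zero]
      rcases hind01 z.1 z.2 with h | h
      · rw [h, zero_mul]; exact ha0 _ _
      · rw [h, one_mul]
  have hSup0 : 0 ≤ Sup := by
    rw [hSupdef]
    apply Finset.sum_nonneg
    intro z _
    rcases hind01 z.1 z.2 with h | h <;> rw [h] <;> simp [ha0 z.1 z.2]
  have hSupAbs0 : 0 ≤ SupAbs := by
    rw [hSupAbsdef]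
    apply Finset.sum_nonneg
    intro z _
    rcases hind01 z.1 z.2 with h | h <;> rw [h] <;> simp [norm_nonneg]
  have hcnt0 : 0 ≤ cnt := by
    rw [hcntdef]
    apply Finset.sum_nonneg
    intro z _
    rcases hind01 z.1 z.2 with h | h <;> rw [h] <;> norm_num
  -- Cauchy-Schwarz
  have hCS : SupAbs ^ 2 ≤ cnt * Sup := by
    have h0 := Finset.sum_mul_sq_le_sq_mul_sq Finset.univ
      (fun z : ((i : Fin p) × Fin (m i)) × ((i : Fin p) × Fin (m i)) => ind z.1 z.2)
      (fun z => ind z.1 z.2 * ‖EQ z.1 z.2‖)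
    have e1 : ∀ z : ((i : Fin p) × Fin (m i)) × ((i : Fin p) × Fin (m i)),
        ind z.1 z.2 * (ind z.1 z.2 * ‖EQ z.1 z.2‖) =
          ind z.1 z.2 * ‖EQ z.1 z.2‖ := by
      intro z
      rcases hind01 z.1 z.2 with h | h <;> rw [h] <;> ring
    have e2 : ∀ z : ((i : Fin p) × Fin (m i)) × ((i : Fin p) × Fin (m i)),
        ind z.1 z.2 ^ 2 = ind z.1 z.2 := by
      intro z
      rcases hind01 z.1 z.2 with h | h <;> rw [h] <;> ring
    have e3 : ∀ z : ((i : Fin p) × Fin (m i)) × ((i : Fin p) × Fin (m i)),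
        (ind z.1 z.2 * ‖EQ z.1 z.2‖) ^ 2 = ind z.1 z.2 * a z.1 z.2 := by
      intro z
      rw [ha]
      rcases hind01 z.1 z.2 with h | h <;> rw [h] <;> ring
    rw [Finset.sum_congr rfl fun z _ => e1 z, Finset.sum_congr rfl fun z _ => e2 z,
      Finset.sum_congr rfl fun z _ => e3 z] at h0
    rw [hSupAbsdef, hcntdef, hSupdef]
    exact h0
  -- counting the superdiagonal entries
  have hcnt_eq : cnt = (n : ℝ) - p := by
    have h1 : cnt = ∑ x : (i : Fin p) × Fin (m i), ∑ y, ind x y :=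
      Fintype.sum_prod_type _
    have hinner : ∀ x : (i : Fin p) × Fin (m i),
        (∑ y, ind x y) = if (x.2 : ℕ) + 1 < m x.1 then (1 : ℝ) else 0 := by
      rintro ⟨i, j⟩
      by_cases hx : (j : ℕ) + 1 < m i
      · rw [if_pos hx]
        have key : ∀ y : (i : Fin p) × Fin (m i),
            ind ⟨i, j⟩ y = if y = (⟨i, ⟨(j : ℕ) + 1, hx⟩⟩ : (i : Fin p) × Fin (m i))
              then (1 : ℝ) else 0 := by
          rintro ⟨i', k⟩
          rw [hind]
          dsimp only
          by_cases h1 : i = i'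
          · cases h1
            by_cases h2 : (j : ℕ) + 1 = (k : ℕ)
            · have hck : (⟨i, k⟩ : (i : Fin p) × Fin (m i)) = ⟨i, ⟨(j : ℕ) + 1, hx⟩⟩ :=
                congrArg (Sigma.mk i) (Fin.ext h2.symm)
              rw [if_pos ⟨rfl, h2⟩, if_pos hck]
            · rw [if_neg (fun hc => h2 hc.2), if_neg]
              intro hc
              have hk : k = ⟨(j : ℕ) + 1, hx⟩ := eq_of_heq (Sigma.mk.inj_iff.mp hc).2
              exact h2 (by rw [hk])
          · rw [if_neg (fun hc => h1 hc.1), if_neg]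
            intro hc
            exact h1 ((congrArg Sigma.fst hc).symm)
        rw [Finset.sum_congr rfl fun y _ => key y, Finset.sum_ite_eq' Finset.univ]
        simp
      · rw [if_neg hx]
        apply Finset.sum_eq_zero
        rintro ⟨i', k⟩ -
        rw [hind]
        dsimp only
        rw [if_neg]
        rintro ⟨h1, h2⟩
        cases h1
        exact hx (h2 ▸ k.2)
    have h2 : cnt = ∑ x : (i : Fin p) × Fin (m i),
        (if (x.2 : ℕ) + 1 < m x.1 then (1 : ℝ) else 0) := by
      rw [h1]
      exact Finset.sum_congr rfl fun x _ => hinner x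
    rw [h2, ← Finset.univ_sigma_univ, Finset.sum_sigma]
    have hper : ∀ i : Fin p,
        (∑ j : Fin (m i), if (j : ℕ) + 1 < m i then (1 : ℝ) else 0) = (m i : ℝ) - 1 := by
      intro i
      rw [Fin.sum_univ_eq_sum_range (fun t => if t + 1 < m i then (1 : ℝ) else 0)]
      rw [Finset.sum_boole]
      have hfil : (Finset.range (m i)).filter (fun t => t + 1 < m i)
          = Finset.range (m i - 1) := by
        ext t
        simp only [Finset.mem_filter, Finset.mem_range]
        omega
      rw [hfil, Finset.card_range, Nat.cast_sub (hm i)]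
      norm_num
    rw [Finset.sum_congr rfl fun i _ => hper i, Finset.sum_sub_distrib,
      Finset.sum_const, Finset.card_univ, Fintype.card_fin, nsmul_eq_mul, mul_one, hn]
    push_cast
    ring
  -- final assembly
  have hε2 : ε ^ 2 ≤ 1 := by nlinarith
  have hD0 : Sup ≤ deltaSq EQ := by
    rw [hFeq]
    linarith [hSupDg_le_F, ht_le_Dg]
  have hSA : SupAbs ≤ Real.sqrt ((n : ℝ) - p) * delta EQ := by
    calc SupAbs ≤ Real.sqrt (cnt * Sup) := Real.le_sqrt_of_sq_le hCS
      _ = Real.sqrt cnt * Real.sqrt Sup := Real.sqrt_mul hcnt0 _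
      _ = Real.sqrt ((n : ℝ) - p) * Real.sqrt Sup := by rw [hcnt_eq]
      _ ≤ Real.sqrt ((n : ℝ) - p) * delta EQ := by
          apply mul_le_mul_of_nonneg_left _ (Real.sqrt_nonneg _)
          rw [delta]
          exact Real.sqrt_le_sqrt hD0
  have k1 : (1 - c1) * Dg ≤ (1 - c1) * t :=
    mul_le_mul_of_nonpos_left ht_le_Dg (by linarith)
  have k2 : (ε ^ 2 - c1) * Sup ≤ 0 :=
    mul_nonpos_of_nonpos_of_nonneg (by linarith) hSup0
  have k3 : 2 * ε ^ 2 * SupAbs ≤ 2 * ε ^ 2 * (Real.sqrt ((n : ℝ) - p) * delta EQ) :=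
    mul_le_mul_of_nonneg_left hSA (by positivity)
  have k4 : c1 * deltaSq EQ = c1 * F - c1 * t := by rw [hFeq]; ring
  have k5 : ε ^ 2 * cnt = ((n : ℝ) - p) * ε ^ 2 := by rw [hcnt_eq]; ring
  have k6 : (1 - c1) * t = t - c1 * t := by ring
  linarith [hmain, k1, k2, k3, k4, k5, k6]
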